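/- The rows of the matrix C^r (the change-count transform of the binary reflected Gray code) are in convex position and the polytope conv{C^r_1,…,C^r_{2^r}} is lattice-empty: its set of extreme points equals {C^r_k}_{k=1}^{2^r}, and its intersection with Z^r equals {C^r_k}_{k=1}^{2^r}. -/

import Mathlib

/-- Binary reflected Gray code `K^r`, 0-indexed: `grayK r j i` is the entry in row
`j ∈ {0,…,2^r−1}` and column `i ∈ {0,…,r−1}`.  Base case `K^1 = (0;1)` and
`K^{r+1} = ((K^r, 0); (rev(K^r), 1))` where `rev` reverses the rows. -/
def grayK : ℕ → ℕ → ℕ → ℤ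
  | 0, _, _ => 0
  | (r+1), j, i =>
    if j < 2^r then (if i = r then 0 else grayK r j i)
    else (if i = r then 1 else grayK r (2^(r+1) - 1 - j) i)

-- complement bit lemma
lemma bit_compl {n j i : ℕ} (hj : j < 2^n) (hi : i < n) :
    (2^n - 1 - j) / 2^i % 2 = 1 - j / 2^i % 2 := by
  have he : 0 < 2^i := pow_pos (by norm_num) _
  set e := 2^i with hedef
  obtain ⟨q, s, hs, hk⟩ : ∃ q s, s < e ∧ j = e * q + s :=
    ⟨j / e, j % e, Nat.mod_lt _ he, by rw [Nat.div_add_mod]⟩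
  set P := 2^(n-i) with hPdef
  have hpow : 2^n = P * e := by
    rw [hPdef, hedef, ← pow_add]; congr 1; omega
  have hcomm : e * P = P * e := Nat.mul_comm _ _
  have hq : q < P := by
    by_contra h
    push_neg at h
    have : e * P ≤ e * q := Nat.mul_le_mul_left _ h
    omega
  have hle : e * q + e ≤ e * P := by
    have h1 : e * (q + 1) ≤ e * P := Nat.mul_le_mul_left _ (by omega)
    have h2 : e * (q + 1) = e * q + e := Nat.mul_succ e q
    omega
  have hmul : e * (P - 1 - q) = e * P - e - e * q := by
    rw [Nat.mul_sub, Nat.mul_sub, Nat.mul_one]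
  have h1 : 2^n - 1 - j = e * (P - 1 - q) + (e - 1 - s) := by omega
  have h2 : (2^n - 1 - j) / e = P - 1 - q := by
    rw [h1, Nat.mul_add_div he, Nat.div_eq_of_lt (by omega), Nat.add_zero]
  have h3 : j / e = q := by
    rw [hk, Nat.mul_add_div he, Nat.div_eq_of_lt hs, Nat.add_zero]
  rw [h2, h3]
  have hni : 2 ≤ P := by
    have : 2^1 ≤ 2^(n-i) := Nat.pow_le_pow_right (by norm_num) (by omega)
    simpa [hPdef] using this
  have : P % 2 = 0 := by
    have : (2:ℕ) ∣ P := dvd_pow_self 2 (by omega)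
    omega
  omega

-- closed form for grayK
lemma grayK_eq : ∀ r j i, j < 2^r → i < r → grayK r j i = ((j / 2^i + j / 2^(i+1)) % 2 : ℕ) := by
  intro r
  induction r with
  | zero => intro j i _ hi; omega
  | succ r ih =>
    intro j i hj hi
    rw [grayK]
    by_cases hjr : j < 2^r
    · rw [if_pos hjr]
      by_cases hir : i = r
      · subst hir
        rw [Nat.div_eq_of_lt hjr, Nat.div_eq_of_lt hj]
        norm_num
      · rw [if_neg hir, ih j i hjr (by omega)]
    · rw [if_neg hjr]
      push_neg at hjr
      by_cases hir : i = r
      · subst hir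
        have he : 0 < 2^i := pow_pos (by norm_num) _
        have hpow : (2:ℕ)^(i+1) = 2 * 2^i := by ring
        have hA : 1 ≤ j / 2^i := (Nat.le_div_iff_mul_le he).2 (by omega)
        have hB : j / 2^i < 2 := (Nat.div_lt_iff_lt_mul he).2 (by omega)
        have hC : j / 2^(i+1) = 0 := Nat.div_eq_of_lt (by omega)
        have h1 : j / 2^i = 1 := by omega
        rw [h1, hC]; norm_num
      · have hir' : i < r := by omega
        have hpow : (2:ℕ)^(r+1) = 2 * 2^r := by ring
        have hm : 2^(r+1) - 1 - j < 2^r := by omega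
        rw [if_neg hir, ih _ i hm hir']
        have m1 : (2^(r+1) - 1 - j) / 2^i % 2 = 1 - j / 2^i % 2 :=
          bit_compl (n := r+1) hj (by omega)
        have m2 : (2^(r+1) - 1 - j) / 2^(i+1) % 2 = 1 - j / 2^(i+1) % 2 :=
          bit_compl (n := r+1) hj (by omega)
        rw [Nat.cast_inj]
        omega


/-- `C^r`, 0-indexed: `grayC r k i = Σ_{j=1}^{k} |K^r_{j,i} − K^r_{j−1,i}|`, the
number of value changes among the first `k+1` entries of column `i` of the
binary reflected Gray code. -/
def grayC (r k i : ℕ) : ℤ := ∑ j ∈ Finset.range k, |grayK r (j+1) i - grayK r j i|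

lemma absmod (a b : ℕ) : |((a % 2 : ℕ) : ℤ) - ((b % 2 : ℕ) : ℤ)| = (((a + b) % 2 : ℕ) : ℤ) := by
  have hab : (a + b) % 2 = (a % 2 + b % 2) % 2 := by omega
  rcases Nat.mod_two_eq_zero_or_one a with ha | ha <;>
    rcases Nat.mod_two_eq_zero_or_one b with hb | hb <;>
      rw [ha, hb] <;> rw [hab, ha, hb] <;> norm_num

lemma step_div (e k : ℕ) (he : 0 < e) :
    ((((k+1)/e + (k+1)/(2*e) + (k/e + k/(2*e))) % 2 : ℕ) : ℤ)
      = (((k+1)/e : ℕ) : ℤ) - (((k+1)/(2*e) : ℕ) : ℤ)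
        - ((((k/e : ℕ)) : ℤ) - (((k/(2*e) : ℕ)) : ℤ)) := by
  have he2 : 0 < 2*e := by omega
  obtain ⟨m, R, hR, hk⟩ : ∃ m R, R < 2*e ∧ k = 2*e*m + R :=
    ⟨k / (2*e), k % (2*e), Nat.mod_lt _ he2, (Nat.div_add_mod k (2*e)).symm⟩
  obtain ⟨b, t, hb, ht, hbt⟩ : ∃ b t, b < 2 ∧ t < e ∧ R = e*b + t := by
    refine ⟨R / e, R % e, (Nat.div_lt_iff_lt_mul he).2 (by omega), Nat.mod_lt _ he,
      (Nat.div_add_mod R e).symm⟩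
  have dk2 : k / (2*e) = m := by
    rw [hk, Nat.mul_add_div he2, Nat.div_eq_of_lt hR, add_zero]
  rcases (by omega : b = 0 ∨ b = 1) with hb01 | hb01 <;> rw [hb01] at hbt
  · -- b = 0, R = t
    have dk1 : k / e = 2*m := by
      rw [show k = e*(2*m) + t by rw [show e*(2*m) = 2*e*m by ring]; omega,
        Nat.mul_add_div he, Nat.div_eq_of_lt ht, add_zero]
    by_cases hc : t + 1 < e
    · have d1 : (k+1) / e = 2*m := by
        rw [show k+1 = e*(2*m) + (t+1) by rw [show e*(2*m) = 2*e*m by ring]; omega,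
          Nat.mul_add_div he, Nat.div_eq_of_lt hc, add_zero]
      have d2 : (k+1) / (2*e) = m := by
        rw [show k+1 = 2*e*m + (t+1) by omega, Nat.mul_add_div he2,
          Nat.div_eq_of_lt (by omega), add_zero]
      rw [d1, d2, dk1, dk2]
      omega
    · have hte : t + 1 = e := by omega
      have d1 : (k+1) / e = 2*m + 1 := by
        rw [show k+1 = e*(2*m+1) by rw [show e*(2*m+1) = 2*e*m + e by ring]; omega,
          Nat.mul_div_cancel_left _ he]
      have d2 : (k+1) / (2*e) = m := by
        rw [show k+1 = 2*e*m + e by omega, Nat.mul_add_div he2,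
          Nat.div_eq_of_lt (by omega), add_zero]
      rw [d1, d2, dk1, dk2]
      omega
  · -- b = 1, R = e + t
    have dk1 : k / e = 2*m + 1 := by
      rw [show k = e*(2*m+1) + t by rw [show e*(2*m+1) = 2*e*m + e by ring]; omega,
        Nat.mul_add_div he, Nat.div_eq_of_lt ht, add_zero]
    by_cases hc : t + 1 < e
    · have d1 : (k+1) / e = 2*m + 1 := by
        rw [show k+1 = e*(2*m+1) + (t+1) by rw [show e*(2*m+1) = 2*e*m + e by ring]; omega,
          Nat.mul_add_div he, Nat.div_eq_of_lt hc, add_zero]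
      have d2 : (k+1) / (2*e) = m := by
        rw [show k+1 = 2*e*m + (e*1+t+1) by omega, Nat.mul_add_div he2,
          Nat.div_eq_of_lt (by omega), add_zero]
      rw [d1, d2, dk1, dk2]
      omega
    · have hte : t + 1 = e := by omega
      have d1 : (k+1) / e = 2*m + 2 := by
        rw [show k+1 = e*(2*m+2) by rw [show e*(2*m+2) = 2*e*m + e + e by ring]; omega,
          Nat.mul_div_cancel_left _ he]
      have d2 : (k+1) / (2*e) = m + 1 := by
        rw [show k+1 = 2*e*(m+1) by rw [show 2*e*(m+1) = 2*e*m + 2*e by ring]; omega,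
          Nat.mul_div_cancel_left _ he2]
      rw [d1, d2, dk1, dk2]
      omega

lemma grayC_eq (r : ℕ) : ∀ k i, k < 2^r → i < r →
    grayC r k i = ((k / 2^i : ℕ) : ℤ) - ((k / 2^(i+1) : ℕ) : ℤ) := by
  intro k
  induction k with
  | zero => intro i _ _; simp [grayC]
  | succ k ih =>
    intro i hk hi
    have he : 0 < 2^i := pow_pos (by norm_num) _
    have hpow : (2:ℕ)^(i+1) = 2 * 2^i := by ring
    rw [grayC, Finset.sum_range_succ, ← grayC, ih i (by omega) hi,
      grayK_eq r (k+1) i (by omega) hi, grayK_eq r k i (by omega) hi, absmod]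
    have hs := step_div (2^i) k he
    rw [hpow]
    rw [hs]
    ring


/-- The set of rows of `C^r`, viewed as points of `ℝ^r`. -/
def grayCRows (r : ℕ) : Set (Fin r → ℝ) :=
  {v | ∃ k < 2^r, v = fun i : Fin r => (grayC r k (i : ℕ) : ℝ)}

-- sum over a filter on Fin r as a sum over an Ico
lemma filter_sum (r : ℕ) (i : Fin r) (G : ℕ → ℝ) :
    ∑ j ∈ Finset.univ.filter (fun j : Fin r => i < j), G (j : ℕ)
      = ∑ t ∈ Finset.Ico ((i:ℕ)+1) r, G t := by
  rw [Finset.sum_filter]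
  have h0 : ∑ j : Fin r, (if i < j then G (j:ℕ) else 0)
      = ∑ t ∈ Finset.range r, (if (i:ℕ) < t then G t else 0) := by
    rw [← Fin.sum_univ_eq_sum_range (fun t => if (i:ℕ) < t then G t else 0) r]
    exact Finset.sum_congr rfl (fun j _ => rfl)
  rw [h0, Finset.range_eq_Ico,
    ← Finset.sum_Ico_consecutive _ (Nat.zero_le ((i:ℕ)+1)) (by omega : (i:ℕ)+1 ≤ r)]
  have h1 : ∑ t ∈ Finset.Ico 0 ((i:ℕ)+1), (if (i:ℕ) < t then G t else 0) = 0 :=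
    Finset.sum_eq_zero (fun t ht => by
      rw [if_neg]; simp only [Finset.mem_Ico] at ht; omega)
  have h2 : ∑ t ∈ Finset.Ico ((i:ℕ)+1) r, (if (i:ℕ) < t then G t else 0)
      = ∑ t ∈ Finset.Ico ((i:ℕ)+1) r, G t :=
    Finset.sum_congr rfl (fun t ht => by
      rw [if_pos]; simp only [Finset.mem_Ico] at ht; omega)
  rw [h1, h2, zero_add]

lemma telescope (F : ℕ → ℝ) (m n : ℕ) (hmn : m ≤ n) :
    ∑ t ∈ Finset.Ico m n, (F t - F (t+1)) = F m - F n := by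
  rw [Finset.sum_Ico_eq_sum_range]
  have h1 : ∑ l ∈ Finset.range (n - m), (F (m + l) - F (m + l + 1))
      = ∑ l ∈ Finset.range (n - m), ((fun l => F (m + l)) l - (fun l => F (m + l)) (l+1)) :=
    Finset.sum_congr rfl (fun l _ => by simp [Nat.add_assoc])
  rw [h1, Finset.sum_range_sub' (fun l => F (m + l)) (n - m)]
  simp only [Nat.add_zero]
  congr 2
  omega

-- image of a row of C under the map T, coordinatewise
lemma T_row (r k : ℕ) (hk : k < 2^r) (i : Fin r) :
    ((grayC r k (i:ℕ) : ℤ) : ℝ)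
      - ∑ j ∈ Finset.univ.filter (fun j : Fin r => i < j), ((grayC r k (j:ℕ) : ℤ) : ℝ)
      = ((k / 2^(i:ℕ) % 2 : ℕ) : ℝ) := by
  set F : ℕ → ℝ := fun t => ((k / 2^t : ℕ) : ℝ) with hF
  have hrow : ∀ j : Fin r, ((grayC r k (j:ℕ) : ℤ) : ℝ) = F (j:ℕ) - F ((j:ℕ)+1) := by
    intro j
    rw [grayC_eq r k (j:ℕ) hk j.isLt]
    simp only [hF, Int.cast_sub, Int.cast_natCast]
  have hsum : ∑ j ∈ Finset.univ.filter (fun j : Fin r => i < j), ((grayC r k (j:ℕ) : ℤ) : ℝ)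
      = F ((i:ℕ)+1) - F r := by
    rw [Finset.sum_congr rfl (fun j _ => hrow j),
      filter_sum r i (fun t => F t - F (t+1)), telescope F ((i:ℕ)+1) r (by omega)]
  rw [hrow i, hsum]
  have hFr : F r = 0 := by
    simp only [hF, Nat.div_eq_of_lt hk, Nat.cast_zero]
  have hdd : k / 2^((i:ℕ)+1) = k / 2^(i:ℕ) / 2 := by
    rw [Nat.div_div_eq_div_mul, ← pow_succ]
  have : k / 2^(i:ℕ) % 2 = k / 2^(i:ℕ) - 2 * (k / 2^((i:ℕ)+1)) := by omega
  rw [hFr, hF, this]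
  have hle : 2 * (k / 2^((i:ℕ)+1)) ≤ k / 2^(i:ℕ) := by omega
  push_cast [hle]
  ring

lemma sum_two_pow (n : ℕ) : ∑ t ∈ Finset.range n, 2^t = 2^n - 1 := by
  induction n with
  | zero => simp
  | succ n ih =>
    rw [Finset.sum_range_succ, ih]
    have : 0 < 2^n := pow_pos (by norm_num) _
    have : (2:ℕ)^(n+1) = 2 * 2^n := by ring
    omega

lemma sum_bits_lt (r : ℕ) (c : ℕ → ℕ) (hc : ∀ t, c t ≤ 1) :
    ∑ t ∈ Finset.range r, 2^t * c t < 2^r := by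
  have h1 : ∑ t ∈ Finset.range r, 2^t * c t ≤ ∑ t ∈ Finset.range r, 2^t :=
    Finset.sum_le_sum (fun t _ => by have := hc t; nlinarith [pow_pos (show 0 < 2 by norm_num) t])
  have h2 := sum_two_pow r
  have : 0 < 2^r := pow_pos (by norm_num) _
  omega

lemma bits_of_sum (r : ℕ) (c : ℕ → ℕ) (hc : ∀ t, c t ≤ 1) (i : ℕ) (hi : i < r) :
    (∑ t ∈ Finset.range r, 2^t * c t) / 2^i % 2 = c i := by
  have he : 0 < 2^i := pow_pos (by norm_num) _
  set L := ∑ t ∈ Finset.range i, 2^t * c t with hL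
  have hLlt : L < 2^i := sum_bits_lt i c hc
  set H := ∑ l ∈ Finset.range (r - (i+1)), 2^l * c (i+1+l) with hH
  have hsplit : ∑ t ∈ Finset.range r, 2^t * c t = L + 2^i * c i + 2^(i+1) * H := by
    rw [Finset.range_eq_Ico,
      ← Finset.sum_Ico_consecutive (fun t => 2^t * c t) (Nat.zero_le (i+1)) (by omega : i+1 ≤ r)]
    have e1 : ∑ t ∈ Finset.Ico 0 (i+1), 2^t * c t = L + 2^i * c i := by
      rw [← Finset.range_eq_Ico, Finset.sum_range_succ]
    have e2 : ∑ t ∈ Finset.Ico (i+1) r, 2^t * c t = 2^(i+1) * H := by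
      rw [Finset.sum_Ico_eq_sum_range, hH, Finset.mul_sum]
      exact Finset.sum_congr rfl (fun l _ => by rw [pow_add]; ring)
    rw [e1, e2]
  have hdiv : (∑ t ∈ Finset.range r, 2^t * c t) / 2^i = 2 * H + c i := by
    rw [hsplit, show L + 2^i * c i + 2^(i+1) * H = 2^i * (2 * H + c i) + L by ring,
      Nat.mul_add_div he, Nat.div_eq_of_lt hLlt, add_zero]
  rw [hdiv]
  have := hc i
  omega

lemma extremePoints_Icc01 : Set.extremePoints ℝ (Set.Icc (0:ℝ) 1) = {0, 1} := by
  ext x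
  constructor
  · rintro ⟨hx, h⟩
    by_contra hx01
    simp only [Set.mem_insert_iff, Set.mem_singleton_iff, not_or] at hx01
    have h0 : 0 < x ∧ x < 1 := by
      rcases hx with ⟨h1, h2⟩
      exact ⟨lt_of_le_of_ne h1 (Ne.symm hx01.1), lt_of_le_of_ne h2 hx01.2⟩
    have := h (show (0:ℝ) ∈ Set.Icc (0:ℝ) 1 by norm_num)
      (show (1:ℝ) ∈ Set.Icc (0:ℝ) 1 by norm_num)
      (by rw [openSegment_eq_Ioo (by norm_num : (0:ℝ) < 1)]; exact ⟨h0.1, h0.2⟩)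
    exact hx01.1 this.symm
  · intro hx
    rcases hx with rfl | rfl
    · refine ⟨by norm_num, ?_⟩
      rintro x1 hx1 x2 hx2 ⟨a, b, ha, hb, hab, heq⟩
      simp only [smul_eq_mul] at heq
      nlinarith [hx1.1, hx1.2, hx2.1, hx2.2]
    · refine ⟨by norm_num, ?_⟩
      rintro x1 hx1 x2 hx2 ⟨a, b, ha, hb, hab, heq⟩
      simp only [smul_eq_mul] at heq
      nlinarith [hx1.1, hx1.2, hx2.1, hx2.2]

noncomputable def Tlin (r : ℕ) : (Fin r → ℝ) →ₗ[ℝ] (Fin r → ℝ) where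
  toFun x := fun i => x i - ∑ j ∈ Finset.univ.filter (fun j : Fin r => i < j), x j
  map_add' x y := by
    funext i
    simp only [Pi.add_apply, Finset.sum_add_distrib]
    ring
  map_smul' c x := by
    funext i
    simp only [Pi.smul_apply, smul_eq_mul, RingHom.id_apply, ← Finset.mul_sum]
    ring

lemma Tlin_apply (r : ℕ) (x : Fin r → ℝ) (i : Fin r) :
    Tlin r x i = x i - ∑ j ∈ Finset.univ.filter (fun j : Fin r => i < j), x j := rfl

lemma Tlin_inj (r : ℕ) : Function.Injective (Tlin r) := by
  rw [← LinearMap.ker_eq_bot]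
  rw [Submodule.eq_bot_iff]
  intro x hx
  rw [LinearMap.mem_ker] at hx
  have key : ∀ n : ℕ, ∀ i : Fin r, r - (i:ℕ) ≤ n → x i = 0 := by
    intro n
    induction n with
    | zero => intro i h; have := i.isLt; omega
    | succ n ih =>
      intro i h
      have hxi : x i - ∑ j ∈ Finset.univ.filter (fun j : Fin r => i < j), x j = 0 := by
        have := congrFun hx i
        simpa [Tlin_apply] using this
      have hsum : ∑ j ∈ Finset.univ.filter (fun j : Fin r => i < j), x j = 0 :=
        Finset.sum_eq_zero (fun j hj => by
          simp only [Finset.mem_filter] at hj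
          exact ih j (by have := hj.2; rw [Fin.lt_def] at this; omega))
      rw [hsum] at hxi
      simpa using hxi
  funext i
  exact key r i (by omega)

/-- The rows of `C^r` are in convex position and their convex hull is
lattice-empty: the extreme points of `conv{C^r_k}` are exactly the rows, and
the only integer points of `conv{C^r_k}` are the rows. -/
theorem grayC_rows_convex_position_and_lattice_empty (r : ℕ) (hr : 1 ≤ r) :
    Set.extremePoints ℝ (convexHull ℝ (grayCRows r)) = grayCRows r ∧
    convexHull ℝ (grayCRows r) ∩ {v : Fin r → ℝ | ∀ i, ∃ z : ℤ, v i = (z : ℝ)}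
      = grayCRows r := by
  classical
  set V : Set (Fin r → ℝ) := Set.univ.pi (fun _ => ({0,1} : Set ℝ)) with hVdef
  set Q : Set (Fin r → ℝ) := Set.univ.pi (fun _ => Set.Icc (0:ℝ) 1) with hQdef
  set e : (Fin r → ℝ) ≃ₗ[ℝ] (Fin r → ℝ) :=
    LinearEquiv.ofInjectiveEndo (Tlin r) (Tlin_inj r) with hedef
  have hecoe : ⇑e = ⇑(Tlin r) := rfl
  have hrowT : ∀ k, k < 2^r → ∀ i : Fin r,
      e (fun i : Fin r => ((grayC r k (i:ℕ) : ℤ) : ℝ)) i = ((k / 2^(i:ℕ) % 2 : ℕ) : ℝ) := by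
    intro k hk i
    rw [hecoe, Tlin_apply]
    exact T_row r k hk i
  have himg : ⇑e '' grayCRows r = V := by
    apply Set.Subset.antisymm
    · rintro y ⟨v, ⟨k, hk, rfl⟩, rfl⟩
      rw [hVdef, Set.mem_univ_pi]
      intro i
      rw [hrowT k hk i]
      rcases Nat.mod_two_eq_zero_or_one (k / 2^(i:ℕ)) with h | h <;> rw [h] <;> simp
    · intro y hy
      rw [hVdef, Set.mem_univ_pi] at hy
      set c : ℕ → ℕ := fun t => if h : t < r then (if y ⟨t, h⟩ = 1 then 1 else 0) else 0 with hc
      have hc1 : ∀ t, c t ≤ 1 := by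
        intro t; rw [hc]; dsimp only; split
        · split <;> omega
        · omega
      set k := ∑ t ∈ Finset.range r, 2^t * c t with hk
      have hklt : k < 2^r := sum_bits_lt r c hc1
      refine ⟨fun i : Fin r => ((grayC r k (i:ℕ) : ℤ) : ℝ), ⟨k, hklt, rfl⟩, ?_⟩
      funext i
      rw [hrowT k hklt i, bits_of_sum r c hc1 (i:ℕ) i.isLt]
      have hyi := hy i
      have hfin : (⟨(i:ℕ), i.isLt⟩ : Fin r) = i := by
        apply Fin.ext; rfl
      rcases hyi with h0 | h1
      · rw [hc]; dsimp only
        rw [dif_pos i.isLt, hfin, h0, if_neg (by norm_num), Nat.cast_zero]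
      · rw [Set.mem_singleton_iff] at h1
        rw [hc]; dsimp only
        rw [dif_pos i.isLt, hfin, h1, if_pos rfl, Nat.cast_one]
  have rows_eq : grayCRows r = ⇑e.symm '' V := by
    rw [← himg]
    exact (e.toEquiv.symm_image_image (grayCRows r)).symm
  have hullV : convexHull ℝ V = Q := by
    rw [hVdef, hQdef, convexHull_pi]
    simp only [convexHull_pair, segment_eq_Icc (zero_le_one (α := ℝ))]
  have hhull : convexHull ℝ (grayCRows r) = ⇑e.symm '' Q := by
    rw [rows_eq, ← hullV]
    exact (e.symm.toLinearMap.image_convexHull V).symm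
  have hQV : Set.extremePoints ℝ Q = V := by
    rw [hQdef, hVdef, extremePoints_pi]
    simp only [extremePoints_Icc01]
  constructor
  · rw [hhull, ← image_extremePoints e.symm Q, hQV, ← rows_eq]
  · apply Set.Subset.antisymm
    · rintro x ⟨hx1, hx2⟩
      rw [hhull] at hx1
      obtain ⟨q, hq, rfl⟩ := hx1
      simp only [Set.mem_setOf_eq] at hx2
      choose z hz using hx2
      have hq2 : q ∈ V := by
        rw [hVdef, Set.mem_univ_pi]
        intro i
        have hqe : e (e.symm q) = q := e.apply_symm_apply q
        have hint : q i = ((z i - ∑ j ∈ Finset.univ.filter (fun j : Fin r => i < j), z j : ℤ) : ℝ) := by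
          conv_lhs => rw [← hqe]
          rw [hecoe, Tlin_apply]
          push_cast
          rw [Finset.sum_congr rfl (fun j _ => hz j), hz i]
        have hIcc : q i ∈ Set.Icc (0:ℝ) 1 := by
          rw [hQdef, Set.mem_univ_pi] at hq
          exact hq i
        set w : ℤ := z i - ∑ j ∈ Finset.univ.filter (fun j : Fin r => i < j), z j with hw
        have hw01 : w = 0 ∨ w = 1 := by
          rcases hIcc with ⟨h0, h1⟩
          rw [hint] at h0 h1
          have h0' : (0:ℤ) ≤ w := by exact_mod_cast h0
          have h1' : w ≤ 1 := by exact_mod_cast h1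
          omega
        rcases hw01 with h | h <;> rw [hint, h]
        · left; norm_num
        · right; norm_num
      rw [rows_eq]
      exact ⟨q, hq2, rfl⟩
    · intro x hx
      refine ⟨subset_convexHull ℝ _ hx, ?_⟩
      obtain ⟨k, hk, rfl⟩ := hx
      intro i
      exact ⟨grayC r k (i:ℕ), rfl⟩
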